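/- There exists a ℂ-linear subspace F of the Banach space ℓ^∞ such that F is closed in ℓ^∞, F is infinite dimensional (not finitely generated as a ℂ-module), and every nonzero element f of F does not belong to c₀, i.e. the sequence f does not converge to 0 at infinity. -/

import Mathlib

open scoped ENNReal
open Filter

namespace SpaceabilityAux

noncomputable section

/-- The "spreading" isometric embedding of `ℓ^∞` into itself:
`(T f) n = f (n.unpair.1)`, so each value of `f` is repeated infinitely often. -/
def T : lp (fun _ : ℕ => ℂ) ⊤ →ₗᵢ[ℂ] lp (fun _ : ℕ => ℂ) ⊤ where
  toFun f := ⟨fun n => f n.unpair.1, by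
    apply memℓp_infty
    obtain ⟨C, hC⟩ := (memℓp_infty_iff.mp (lp.memℓp f))
    exact ⟨C, fun x hx => by
      obtain ⟨n, rfl⟩ := hx
      exact hC ⟨n.unpair.1, rfl⟩⟩⟩
  map_add' f g := by ext n; simp [lp.coeFn_add]; rfl
  map_smul' c f := by ext n; simp [lp.coeFn_smul]
  norm_map' f := by
    have hsurj : Function.Surjective (fun n : ℕ => n.unpair.1) :=
      fun k => ⟨Nat.pair k 0, by simp⟩
    have : (Set.range fun n : ℕ => ‖f n.unpair.1‖) = Set.range fun k => ‖f k‖ := by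
      show Set.range ((fun k => ‖f k‖) ∘ fun n : ℕ => n.unpair.1) = _
      rw [Set.range_comp, Set.range_eq_univ.mpr hsurj, Set.image_univ]
    rw [lp.norm_eq_ciSup, lp.norm_eq_ciSup]
    show (⨆ n : ℕ, ‖f n.unpair.1‖) = _
    rw [iSup, iSup, this]

@[simp] lemma T_apply (f : lp (fun _ : ℕ => ℂ) ⊤) (n : ℕ) :
    (T f : ∀ _ : ℕ, ℂ) n = f n.unpair.1 := rfl

/-- Evaluation at a coordinate as a linear map. -/
def ev (j : ℕ) : lp (fun _ : ℕ => ℂ) ⊤ →ₗ[ℂ] ℂ where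
  toFun f := f j
  map_add' f g := by simp [lp.coeFn_add]
  map_smul' c f := by simp [lp.coeFn_smul]

end

end SpaceabilityAux

open SpaceabilityAux

/-- There is a closed, infinite-dimensional (not finitely generated)
`ℂ`-linear subspace `F` of the Banach space `ℓ^∞` every nonzero element of which does
not tend to `0` at infinity (i.e. does not belong to `c₀`). -/
theorem spaceability_ellInfty_czero :
    ∃ F : Submodule ℂ (lp (fun _ : ℕ => ℂ) ⊤),
      IsClosed (F : Set (lp (fun _ : ℕ => ℂ) ⊤)) ∧
      ¬ F.FG ∧
      ∀ f ∈ F, f ≠ 0 →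
        ¬ Tendsto (fun n : ℕ => (f : ∀ _ : ℕ, ℂ) n) atTop (nhds 0) := by
  classical
  refine ⟨LinearMap.range T.toLinearMap, ?_, ?_, ?_⟩
  · have : (LinearMap.range T.toLinearMap : Set (lp (fun _ : ℕ => ℂ) ⊤)) = Set.range T := by
      rw [LinearMap.coe_range, LinearIsometry.coe_toLinearMap]
    rw [this]
    exact T.isometry.isClosedEmbedding.isClosed_range
  · intro hFG
    haveI : Module.Finite ℂ (LinearMap.range T.toLinearMap) := Module.Finite.iff_fg.mpr hFG
    -- the family `T (single k 1)` is linearly independent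
    set v : ℕ → lp (fun _ : ℕ => ℂ) ⊤ := fun k => T (lp.single ⊤ k (1 : ℂ)) with hv
    have hvind : LinearIndependent ℂ v := by
      rw [linearIndependent_iff']
      intro s g hsum i hi
      have := congrArg (ev (Nat.pair i 0)) hsum
      rw [map_sum, map_zero] at this
      simp only [map_smul] at this
      have heval : ∀ k, ev (Nat.pair i 0) (v k) = if i = k then 1 else 0 := by
        intro k
        simp only [hv, ev, LinearMap.coe_mk, AddHom.coe_mk, T_apply, Nat.unpair_pair]
        by_cases h : i = k
        · subst h; exact (by simp [lp.single_apply] : (T (lp.single ⊤ i (1:ℂ)) : ∀ _ : ℕ, ℂ) (Nat.pair i 0) = 1).trans (if_pos rfl).symm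
        · exact (by simp [lp.single_apply, h] : (T (lp.single ⊤ k (1:ℂ)) : ∀ _ : ℕ, ℂ) (Nat.pair i 0) = 0).trans (if_neg h).symm
      rw [Finset.sum_eq_single i] at this
      · rw [heval i, if_pos rfl, smul_eq_mul, mul_one] at this
        exact this
      · intro b hb hbi
        rw [heval b, if_neg (Ne.symm hbi), smul_eq_mul, mul_zero]
      · intro h; exact absurd hi h
    -- lift to the submodule
    set vF : ℕ → (LinearMap.range T.toLinearMap) := fun k =>
      ⟨v k, LinearMap.mem_range.mpr ⟨lp.single ⊤ k 1, rfl⟩⟩ with hvF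
    have hvFind : LinearIndependent ℂ vF :=
      LinearIndependent.of_comp (LinearMap.range T.toLinearMap).subtype
        (show LinearIndependent ℂ ((LinearMap.range T.toLinearMap).subtype ∘ vF) from hvind)
    exact Module.Finite.not_linearIndependent_of_infinite vF hvFind
  · rintro f hf hf0 htend
    obtain ⟨g, rfl⟩ := LinearMap.mem_range.mp hf
    have hg0 : g ≠ 0 := by rintro rfl; simp at hf0
    obtain ⟨k, hk⟩ : ∃ k, (g : ∀ _ : ℕ, ℂ) k ≠ 0 := by
      by_contra h
      push_neg at h
      exact hg0 (lp.ext (funext h))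
    have hpair : Tendsto (fun n : ℕ => Nat.pair k n) atTop atTop :=
      tendsto_atTop_mono (fun n => Nat.right_le_pair k n) tendsto_id
    have := htend.comp hpair
    have heq : ((fun n : ℕ => (T.toLinearMap g : ∀ _ : ℕ, ℂ) n) ∘ fun n => Nat.pair k n)
        = fun _ => (g : ∀ _ : ℕ, ℂ) k := by
      funext n
      simp only [Function.comp_apply, LinearIsometry.coe_toLinearMap, T_apply, Nat.unpair_pair]
    rw [heq] at this
    exact hk (tendsto_nhds_unique tendsto_const_nhds this)
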